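/- The function E defined by E(z) = 0 if ‖z‖ ≤ R, E(z) = (‖z‖ - R)²/2 if R ≤ ‖z‖ ≤ (1+α)R, E(z) = αR‖z‖ - α(1+α/2)R² if ‖z‖ ≥ (1+α)R, is 1-smooth: for all z, w ∈ ℝᵈ, E(w) ≤ E(z) + ⟨∇E(z), w - z⟩ + (1/2)‖w - z‖². -/
import Mathlib


open RealInnerProductSpace

/-- Key polynomial reduction: from the scalar step inequality to the full one. -/
lemma energy_key (r s c er es p : ℝ) (hp : p ≤ r * s) (hc1 : c ≤ 1)
    (hstep : es ≤ er + (c * r) * (s - r) + (s - r) ^ 2 / 2) :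
    es ≤ er + c * (p - r ^ 2) + (1 / 2) * (s ^ 2 - 2 * p + r ^ 2) := by
  linarith [mul_nonneg (sub_nonneg.2 hc1) (sub_nonneg.2 hp)]

/-- The energy function E is 1-smooth:
E(w) ≤ E(z) + ⟪∇E(z), w - z⟫ + ‖w - z‖²/2, with ∇E(z) = φ(‖z‖/R)·z. -/
theorem energy_function_one_smooth
    {d : ℕ} (R α : ℝ) (hR : 0 < R) (hα : 0 < α)
    (φ : ℝ → ℝ)
    (hφ1 : ∀ u : ℝ, u ≤ 1 → φ u = 0)
    (hφ2 : ∀ u : ℝ, 1 ≤ u → u ≤ 1 + α → φ u = 1 - 1 / u)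
    (hφ3 : ∀ u : ℝ, 1 + α ≤ u → φ u = α / u)
    (E : EuclideanSpace ℝ (Fin d) → ℝ)
    (hE1 : ∀ z, ‖z‖ ≤ R → E z = 0)
    (hE2 : ∀ z, R ≤ ‖z‖ → ‖z‖ ≤ (1 + α) * R → E z = (‖z‖ - R) ^ 2 / 2)
    (hE3 : ∀ z, (1 + α) * R ≤ ‖z‖ → E z = α * R * ‖z‖ - α * (1 + α / 2) * R ^ 2) :
    ∀ z w : EuclideanSpace ℝ (Fin d),
      E w ≤ E z + ⟪φ (‖z‖ / R) • z, w - z⟫ + (1 / 2) * ‖w - z‖ ^ 2 := by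
  intro z w
  set r := ‖z‖ with hrdef
  set s := ‖w‖ with hsdef
  set p : ℝ := ⟪z, w⟫ with hpdef
  have hr : 0 ≤ r := norm_nonneg z
  have hs : 0 ≤ s := norm_nonneg w
  have hp : p ≤ r * s := real_inner_le_norm z w
  have hinner : ⟪φ (r / R) • z, w - z⟫ = φ (r / R) * (p - r ^ 2) := by
    rw [real_inner_smul_left, inner_sub_right, real_inner_self_eq_norm_sq]
  have hnorm : ‖w - z‖ ^ 2 = s ^ 2 - 2 * p + r ^ 2 := by
    rw [norm_sub_sq_real, real_inner_comm]
  rw [hinner, hnorm]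
  -- The scalar inequality: E w ≤ E z + (c*r)*(s-r) + (s-r)^2/2, with c*r ∈ {0, r-R, αR}
  have hsstep : ∀ cr : ℝ, E w ≤ E z + cr * (s - r) + (s - r) ^ 2 / 2 →
      E w ≤ E z + cr * (s - r) + (s - r) ^ 2 / 2 := fun _ h => h
  -- case analysis on r
  rcases le_total r R with hA | h1
  · -- r ≤ R : c = 0, E z = 0
    have hc : φ (r / R) = 0 := hφ1 _ ((div_le_one hR).2 hA)
    have hez : E z = 0 := hE1 z hA
    refine energy_key r s _ (E z) (E w) p hp (by rw [hc]; norm_num) ?_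
    rw [hc, hez]
    rcases le_total s R with hsA | hs1
    · rw [hE1 w hsA]; linarith [sq_nonneg (s - r)]
    · rcases le_total s ((1 + α) * R) with hsB | hsC
      · rw [hE2 w hs1 hsB]
        linarith [mul_nonneg (sub_nonneg.2 hA) (by linarith : (0:ℝ) ≤ 2 * s - r - R)]
      · rw [hE3 w hsC]
        linarith [sq_nonneg (s - (1 + α) * R),
          mul_nonneg (sub_nonneg.2 hA) (by linarith [mul_nonneg hα.le hR.le] : (0:ℝ) ≤ 2 * s - r - R)]
  · rcases le_total r ((1 + α) * R) with hB | hC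
    · -- R ≤ r ≤ (1+α)R : c = 1 - R/r, E z = (r-R)^2/2
      have hr0 : 0 < r := lt_of_lt_of_le hR h1
      have hc : φ (r / R) = 1 - R / r := by
        rw [hφ2 _ ((le_div_iff₀ hR).2 (by linarith)) ((div_le_iff₀ hR).2 hB), one_div_div]
      have hc1 : φ (r / R) ≤ 1 := by
        rw [hc]; have : 0 ≤ R / r := div_nonneg hR.le hr0.le; linarith
      have hcr : φ (r / R) * r = r - R := by rw [hc, sub_mul, one_mul, div_mul_cancel₀ R hr0.ne']
      have hez : E z = (r - R) ^ 2 / 2 := hE2 z h1 hB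
      refine energy_key r s _ (E z) (E w) p hp hc1 ?_
      rw [hcr, hez]
      rcases le_total s R with hsA | hs1
      · rw [hE1 w hsA]; linarith [sq_nonneg (s - R)]
      · rcases le_total s ((1 + α) * R) with hsB | hsC
        · rw [hE2 w hs1 hsB]; linarith [sq_nonneg (s - R)]
        · rw [hE3 w hsC]; linarith [sq_nonneg (s - (1 + α) * R)]
    · -- (1+α)R ≤ r : c = αR/r, E z = αRr - α(1+α/2)R²
      have hr0 : 0 < r := lt_of_lt_of_le (by positivity) hC
      have hc : φ (r / R) = α * R / r := by
        rw [hφ3 _ ((le_div_iff₀ hR).2 hC), div_div_eq_mul_div]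
      have hαR : α * R ≤ r :=
        le_trans (by linarith [mul_nonneg hR.le hα.le]) hC
      have hc1 : φ (r / R) ≤ 1 := by rw [hc]; exact (div_le_one hr0).2 hαR
      have hcr : φ (r / R) * r = α * R := by rw [hc, div_mul_cancel₀ _ hr0.ne']
      have hez : E z = α * R * r - α * (1 + α / 2) * R ^ 2 := hE3 z hC
      refine energy_key r s _ (E z) (E w) p hp hc1 ?_
      rw [hcr, hez]
      rcases le_total s R with hsA | hs1
      · rw [hE1 w hsA]
        linarith [sq_nonneg (s - R),
          mul_nonneg (sub_nonneg.2 hC) (by linarith [mul_nonneg hα.le hR.le] : (0:ℝ) ≤ r + (1 + α) * R - 2 * s)]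
      · rcases le_total s ((1 + α) * R) with hsB | hsC
        · rw [hE2 w hs1 hsB]
          linarith [mul_nonneg (sub_nonneg.2 hC) (by linarith : (0:ℝ) ≤ r + (1 + α) * R - 2 * s)]
        · rw [hE3 w hsC]; linarith [sq_nonneg (s - r)]
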